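/- Let λ > 0, d ≥ 1, L > 0, and let φ₁, …, φ_k ∈ ℝ^d satisfy ‖φᵢ‖₂ ≤ L for all i. For each i ∈ {1,…,k} define Σᵢ = λ·I_d + Σ_{j=1}^{i−1} φⱼφⱼᵀ. Then Σ_{i=1}^k min{1, φᵢᵀ Σᵢ⁻¹ φᵢ} ≤ 2d·log((λ + k·L²)/λ). -/

import Mathlib

open Matrix

section Aux

lemma aux_vecMulVec_posSemidef {d : ℕ} (v : Fin d → ℝ) : (vecMulVec v v).PosSemidef := by
  refine Matrix.posSemidef_iff_dotProduct_mulVec.mpr ⟨?_, ?_⟩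
  · ext i j
    simp [vecMulVec, conjTranspose, mul_comm]
  · intro x
    have h : star x ⬝ᵥ (vecMulVec v v) *ᵥ x = (∑ i, v i * x i) * (∑ j, v j * x j) := by
      simp only [star_trivial, vecMulVec, mulVec, dotProduct, of_apply, Finset.sum_mul,
        Finset.mul_sum]
      rw [Finset.sum_comm]
      apply Finset.sum_congr rfl
      intro i _
      apply Finset.sum_congr rfl
      intro j _
      ring
    rw [h]
    exact mul_self_nonneg _

lemma aux_trace_eq_sum_eig {d : ℕ} {A : Matrix (Fin d) (Fin d) ℝ} (hA : A.IsHermitian) :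
    A.trace = ∑ i, hA.eigenvalues i := by
  simpa using hA.trace_eq_sum_eigenvalues

lemma aux_min_le_two_log {x : ℝ} (hx : 0 ≤ x) : min 1 x ≤ 2 * Real.log (1 + x) := by
  rcases le_total x 1 with h | h
  · rw [min_eq_right h]
    have hexp : Real.exp (x / 2) ≤ 1 + x := by
      have h3 : Real.exp (x / 2) ≤ 1 / (1 - x / 2) := by
        rw [le_div_iff₀ (by linarith)]
        have h4 := Real.add_one_le_exp (-(x / 2))
        calc Real.exp (x / 2) * (1 - x / 2)
            ≤ Real.exp (x / 2) * Real.exp (-(x / 2)) := by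
              apply mul_le_mul_of_nonneg_left (by linarith) (Real.exp_pos _).le
          _ = 1 := by rw [← Real.exp_add]; simp
      refine h3.trans ?_
      rw [div_le_iff₀ (by linarith)]
      nlinarith
    have h5 := Real.log_le_log (Real.exp_pos _) hexp
    rw [Real.log_exp] at h5
    linarith
  · rw [min_eq_left h]
    have h2 := Real.log_le_log (by norm_num : (0:ℝ) < 2) (by linarith : (2:ℝ) ≤ 1 + x)
    have hl2 := Real.log_two_gt_d9
    linarith

end Aux

/-- Elliptical potential lemma: for `φ₁, …, φ_k ∈ ℝ^d` with `‖φᵢ‖₂ ≤ L` and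
`Σᵢ = λ I + ∑_{j < i} φⱼ φⱼᵀ`, we have
`∑ᵢ min {1, φᵢᵀ Σᵢ⁻¹ φᵢ} ≤ 2 d log ((λ + k L²)/λ)`. -/
theorem elliptical_potential (d k : ℕ) (hd : 1 ≤ d) (lam L : ℝ)
    (hlam : 0 < lam) (hL : 0 < L)
    (φ : Fin k → Fin d → ℝ) (hφ : ∀ i, Real.sqrt (∑ j, φ i j ^ 2) ≤ L) :
    ∑ i : Fin k,
        min 1 (φ i ⬝ᵥ ((lam • (1 : Matrix (Fin d) (Fin d) ℝ) +
          ∑ j ∈ Finset.Iio i, vecMulVec (φ j) (φ j))⁻¹).mulVec (φ i)) ≤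
      2 * d * Real.log ((lam + k * L ^ 2) / lam) := by
  classical
  set B : ℕ → Matrix (Fin d) (Fin d) ℝ :=
    fun n => ∑ j ∈ Finset.univ.filter (fun j : Fin k => (j : ℕ) < n),
      vecMulVec (φ j) (φ j) with hBdef
  set M : ℕ → Matrix (Fin d) (Fin d) ℝ := fun n => lam • 1 + B n with hMdef
  set x : Fin k → ℝ := fun i => φ i ⬝ᵥ (M i)⁻¹ *ᵥ φ i with hxdef
  -- the summands are `min 1 (x i)`
  have hIio : ∀ i : Fin k,
      (Finset.Iio i) = Finset.univ.filter (fun j : Fin k => (j : ℕ) < (i : ℕ)) := by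
    intro i
    ext j
    simp only [Finset.mem_Iio, Finset.mem_filter, Finset.mem_univ, true_and, Fin.lt_def]
  have hrw : ∀ i : Fin k,
      (φ i ⬝ᵥ ((lam • (1 : Matrix (Fin d) (Fin d) ℝ) +
        ∑ j ∈ Finset.Iio i, vecMulVec (φ j) (φ j))⁻¹).mulVec (φ i)) = x i := by
    intro i
    rw [hIio i]
  -- positive definiteness
  have hBpsd : ∀ n, (B n).PosSemidef := by
    intro n
    apply Finset.sum_induction _ (fun m : Matrix (Fin d) (Fin d) ℝ => m.PosSemidef)
      (fun a b ha hb => ha.add hb) Matrix.PosSemidef.zero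
    intro j _
    exact aux_vecMulVec_posSemidef _
  have hlamPD : (lam • (1 : Matrix (Fin d) (Fin d) ℝ)).PosDef := by
    rw [smul_one_eq_diagonal]
    exact Matrix.PosDef.diagonal (fun i => hlam)
  have hMpd : ∀ n, (M n).PosDef := fun n => hlamPD.add_posSemidef (hBpsd n)
  -- nonnegativity of x
  have hx0 : ∀ i, 0 ≤ x i := by
    intro i
    have h := ((hMpd i).inv).posSemidef.dotProduct_mulVec_nonneg (φ i)
    simpa using h
  -- squared norm bound
  have hsq : ∀ i, ∑ j, φ i j ^ 2 ≤ L ^ 2 := by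
    intro i
    have h : (Real.sqrt (∑ j, φ i j ^ 2)) ^ 2 ≤ L ^ 2 :=
      pow_le_pow_left₀ (Real.sqrt_nonneg _) (hφ i) 2
    rwa [Real.sq_sqrt (by positivity)] at h
  -- determinant recurrence
  have hMsucc : ∀ i : Fin k, M ((i : ℕ) + 1) = M i + vecMulVec (φ i) (φ i) := by
    intro i
    have hfil : (Finset.univ.filter (fun j : Fin k => (j : ℕ) < (i : ℕ) + 1))
        = insert i (Finset.univ.filter (fun j : Fin k => (j : ℕ) < (i : ℕ))) := by
      ext j
      simp [Nat.lt_succ_iff_lt_or_eq, Fin.ext_iff, or_comm]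
      simp only [Fin.le_iff_val_le_val, Fin.lt_iff_val_lt_val]; omega
    have hnotmem : i ∉ Finset.univ.filter (fun j : Fin k => (j : ℕ) < (i : ℕ)) := by simp
    simp only [hMdef, hBdef, hfil, Finset.sum_insert hnotmem]
    abel
  have hdet : ∀ i : Fin k, (M ((i : ℕ) + 1)).det = (M i).det * (1 + x i) := by
    intro i
    have hunit : IsUnit (M i).det := isUnit_iff_ne_zero.mpr (hMpd i).det_pos.ne'
    rw [hMsucc i, vecMulVec_eq Unit, Matrix.det_add_replicateCol_mul_replicateRow hunit]
    congr 1
    rw [det_unique]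
    simp only [Pi.add_apply, Matrix.add_apply, Matrix.one_apply_eq, hxdef]
    congr 1
    simp only [Matrix.mul_apply, Matrix.replicateRow_apply, Matrix.replicateCol_apply, dotProduct, mulVec,
      dotProduct, Finset.sum_mul, Finset.mul_sum]
    rw [Finset.sum_comm]
    apply Finset.sum_congr rfl
    intro a _
    apply Finset.sum_congr rfl
    intro b _
    ring
  -- telescoping product
  have hdetprod : ∀ n, n ≤ k → (M n).det =
      lam ^ d * ∏ i ∈ Finset.univ.filter (fun i : Fin k => (i : ℕ) < n), (1 + x i) := by
    intro n
    induction n with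
    | zero =>
      intro _
      have hB0 : B 0 = 0 := by
        simp [hBdef]
      simp [hMdef, hB0, Matrix.det_smul]
    | succ m ih =>
      intro hmk
      have hm : m < k := hmk
      set i : Fin k := ⟨m, hm⟩ with hi
      have h1 : (M (m + 1)).det = (M m).det * (1 + x i) := hdet i
      have hfil : (Finset.univ.filter (fun j : Fin k => (j : ℕ) < m + 1))
          = insert i (Finset.univ.filter (fun j : Fin k => (j : ℕ) < m)) := by
        ext j
        simp [Nat.lt_succ_iff_lt_or_eq, Fin.ext_iff, or_comm, hi]
        omega
      have hnotmem : i ∉ Finset.univ.filter (fun j : Fin k => (j : ℕ) < m) := by simp [hi]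
      rw [h1, ih (Nat.le_of_succ_le hmk), hfil, Finset.prod_insert hnotmem]
      ring
  have hfilk : (Finset.univ.filter (fun i : Fin k => (i : ℕ) < k)) = Finset.univ :=
    Finset.filter_true_of_mem (fun i _ => i.isLt)
  have hdetk : (M k).det = lam ^ d * ∏ i, (1 + x i) := by
    rw [hdetprod k le_rfl, hfilk]
  -- trace bound
  have htrB : (B k).trace ≤ k * L ^ 2 := by
    rw [hBdef]
    simp only [Matrix.trace_sum]
    have htr1 : ∀ i : Fin k, (vecMulVec (φ i) (φ i)).trace = ∑ j, φ i j ^ 2 := by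
      intro i
      simp [Matrix.trace, vecMulVec, Matrix.diag, pow_two]
    calc ∑ i ∈ Finset.univ.filter (fun j : Fin k => (j : ℕ) < k),
          (vecMulVec (φ i) (φ i)).trace
        ≤ ∑ _i ∈ Finset.univ.filter (fun j : Fin k => (j : ℕ) < k), L ^ 2 := by
          apply Finset.sum_le_sum
          intro i _
          rw [htr1 i]
          exact hsq i
      _ = (Finset.univ.filter (fun j : Fin k => (j : ℕ) < k)).card * L ^ 2 := by
          rw [Finset.sum_const, nsmul_eq_mul]
      _ ≤ k * L ^ 2 := by
          apply mul_le_mul_of_nonneg_right _ (by positivity)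
          have := Finset.card_filter_le (Finset.univ : Finset (Fin k))
            (fun j : Fin k => (j : ℕ) < k)
          simp only [Finset.card_univ, Fintype.card_fin] at this ⊢
          exact_mod_cast this
  have htrM : (M k).trace ≤ d * lam + k * L ^ 2 := by
    have h1 : (M k).trace = d * lam + (B k).trace := by
      simp [hMdef, Matrix.trace_add, Matrix.trace_smul, Matrix.trace_one, mul_comm]
    rw [h1]
    linarith
  -- determinant upper bound via AM-GM
  have hd0 : (0 : ℝ) < d := by exact_mod_cast hd
  have hdetle : (M k).det ≤ (lam + k * L ^ 2) ^ d := by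
    set A := M k with hA
    have hApd := hMpd k
    have herm : A.IsHermitian := hApd.isHermitian
    have heig : A.det = ∏ i, herm.eigenvalues i := by
      simpa using herm.det_eq_prod_eigenvalues
    have hnn : ∀ i, 0 ≤ herm.eigenvalues i := fun i => hApd.posSemidef.eigenvalues_nonneg i
    have hsum : ∑ i, herm.eigenvalues i = A.trace := (aux_trace_eq_sum_eig herm).symm
    -- AM-GM
    have hw : ∑ _i : Fin d, (1 / (d : ℝ)) = 1 := by
      rw [Finset.sum_const, nsmul_eq_mul]
      field_simp
      simp
    have hgm := Real.geom_mean_le_arith_mean_weighted Finset.univ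
      (fun _ => 1 / (d : ℝ)) herm.eigenvalues
      (fun i _ => by positivity) hw (fun i _ => hnn i)
    have hprodrw : ∏ i, herm.eigenvalues i ^ (1 / (d : ℝ))
        = (∏ i, herm.eigenvalues i) ^ (1 / (d : ℝ)) :=
      Real.finset_prod_rpow _ _ (fun i _ => hnn i) _
    have hsumrw : ∑ i, (1 / (d : ℝ)) * herm.eigenvalues i = A.trace / d := by
      rw [← Finset.mul_sum, hsum]
      ring
    rw [hprodrw, hsumrw] at hgm
    have hprodnn : 0 ≤ ∏ i, herm.eigenvalues i := Finset.prod_nonneg (fun i _ => hnn i)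
    have hpow : ((∏ i, herm.eigenvalues i) ^ (1 / (d : ℝ))) ^ (d : ℕ)
        = ∏ i, herm.eigenvalues i := by
      rw [← Real.rpow_natCast ((∏ i, herm.eigenvalues i) ^ (1 / (d : ℝ))) d,
        ← Real.rpow_mul hprodnn]
      rw [one_div, inv_mul_cancel₀ hd0.ne', Real.rpow_one]
    have hamgm : ∏ i, herm.eigenvalues i ≤ (A.trace / d) ^ d := by
      rw [← hpow]
      apply pow_le_pow_left₀ (Real.rpow_nonneg hprodnn _) hgm
    have htrd : A.trace / d ≤ lam + k * L ^ 2 := by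
      rw [div_le_iff₀ hd0]
      have hkL : (0 : ℝ) ≤ k * L ^ 2 := by positivity
      have hd1 : (1 : ℝ) ≤ d := by exact_mod_cast hd
      nlinarith [htrM, mul_nonneg hkL (sub_nonneg.mpr hd1)]
    calc A.det = ∏ i, herm.eigenvalues i := heig
      _ ≤ (A.trace / d) ^ d := hamgm
      _ ≤ (lam + k * L ^ 2) ^ d := by
          apply pow_le_pow_left₀ _ htrd
          have htrnn : 0 ≤ A.trace := hsum ▸ Finset.sum_nonneg (fun i _ => hnn i)
          positivity
  -- wrap up
  have hxpos : ∀ i : Fin k, (0 : ℝ) < 1 + x i := fun i => by linarith [hx0 i]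
  have hprodpos : (0 : ℝ) < ∏ i, (1 + x i) := Finset.prod_pos (fun i _ => hxpos i)
  have hprodle : ∏ i, (1 + x i) ≤ ((lam + k * L ^ 2) / lam) ^ d := by
    have hlp : (0 : ℝ) < lam ^ d := by positivity
    rw [div_pow, le_div_iff₀ hlp]
    calc (∏ i, (1 + x i)) * lam ^ d = (M k).det := by rw [hdetk]; ring
      _ ≤ (lam + k * L ^ 2) ^ d := hdetle
  have hlog : Real.log (∏ i, (1 + x i)) ≤ d * Real.log ((lam + k * L ^ 2) / lam) := by
    have h := Real.log_le_log hprodpos hprodle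
    rwa [Real.log_pow] at h
  calc ∑ i : Fin k,
        min 1 (φ i ⬝ᵥ ((lam • (1 : Matrix (Fin d) (Fin d) ℝ) +
          ∑ j ∈ Finset.Iio i, vecMulVec (φ j) (φ j))⁻¹).mulVec (φ i))
      = ∑ i : Fin k, min 1 (x i) := by
        apply Finset.sum_congr rfl
        intro i _
        rw [hrw i]
    _ ≤ ∑ i : Fin k, 2 * Real.log (1 + x i) :=
        Finset.sum_le_sum (fun i _ => aux_min_le_two_log (hx0 i))
    _ = 2 * Real.log (∏ i, (1 + x i)) := by
        rw [← Finset.mul_sum, Real.log_prod (fun i _ => (hxpos i).ne')]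
    _ ≤ 2 * (d * Real.log ((lam + k * L ^ 2) / lam)) := by linarith
    _ = 2 * d * Real.log ((lam + k * L ^ 2) / lam) := by ring
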